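/- arXiv:2310.15545 — 2 statements merged into one kernel-verified Lean document; each statement's English description precedes it below -/
import Mathlib

section
/- Let R = ℤ[[t]] and consider finite-index ideals of R. The Solomon zeta function ζ(R; s) = Σ_X [R : X]^{−s}, the sum over finite-index ideals X ⊆ R, satisfies the formal Dirichlet series identity ζ(R; s) = Π_{j=1}^{∞} ζ(js − j + 1), where ζ(s) denotes the Riemann zeta function as a formal Dirichlet series Σ_n n^{−s}. -/
/-- The formal Dirichlet series `ζ(js - j + 1) = ∑_m m^{-(js-j+1)} = ∑_m m^{j-1} (m^j)^{-s}`,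
as an arithmetic function: its value at `n` is `m^{j-1}` if `n = m^j` (for some `m ≥ 1`)
and `0` otherwise. -/
def zetaShifted (j : ℕ) : ArithmeticFunction ℕ :=
  ⟨fun n => ∑ m ∈ Finset.range (n + 1), if m ^ j = n ∧ 1 ≤ m then m ^ (j - 1) else 0,
    by simp⟩

open PowerSeries

lemma zetaShifted_apply (j k : ℕ) : zetaShifted j k =
    ∑ m ∈ Finset.range (k + 1), if m ^ j = k ∧ 1 ≤ m then m ^ (j - 1) else 0 := rfl

namespace Stmt17

abbrev PS : Type := PowerSeries ℤ

noncomputable def idx (X : Ideal PS) : ℕ := Nat.card (PS ⧸ X)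

noncomputable def tS : Ideal PS := Ideal.span {(PowerSeries.X : PS)}

noncomputable def mval (X : Ideal PS) : ℕ := Nat.card (PS ⧸ (X ⊔ tS))

noncomputable def mulT : PS →ₗ[PS] PS := LinearMap.mulLeft PS (PowerSeries.X : PS)

noncomputable def Xt (X : Ideal PS) : Ideal PS := Submodule.comap mulT X

lemma mem_Xt {X : Ideal PS} {f : PS} : f ∈ Xt X ↔ (PowerSeries.X : PS) * f ∈ X := Iff.rfl

lemma le_Xt (X : Ideal PS) : X ≤ Xt X := fun f hf => by
  simpa [mem_Xt] using X.mul_mem_left PowerSeries.X hf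

lemma mem_tS {f : PS} : f ∈ tS ↔ ∃ g, f = PowerSeries.X * g := by
  simp [tS, Ideal.mem_span_singleton]
  rfl

lemma range_mulT : LinearMap.range mulT = tS := by
  ext f
  simp only [LinearMap.mem_range, mulT, LinearMap.mulLeft_apply, mem_tS]
  exact ⟨fun ⟨y, hy⟩ => ⟨y, hy.symm⟩, fun ⟨y, hy⟩ => ⟨y, hy.symm⟩⟩

lemma idx_eq_mval_mul (X : Ideal PS) : idx X = mval X * idx (Xt X) := by
  classical
  set φ : PS →ₗ[PS] PS ⧸ X := X.mkQ.comp mulT with hφ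
  have hker : LinearMap.ker φ = Xt X := by
    rw [hφ, LinearMap.ker_comp, Submodule.ker_mkQ]; rfl
  have hrange : LinearMap.range φ = Submodule.map X.mkQ (X ⊔ tS) := by
    rw [hφ, LinearMap.range_comp, range_mulT, Submodule.map_sup, Submodule.mkQ_map_self]
    simp
  have h1 : Nat.card (PS ⧸ X) =
      Nat.card ((PS ⧸ X) ⧸ (LinearMap.range φ).toAddSubgroup) *
        Nat.card (LinearMap.range φ) :=
    AddSubgroup.card_eq_card_quotient_mul_card_addSubgroup _
  have h2 : Nat.card ((PS ⧸ X) ⧸ (LinearMap.range φ).toAddSubgroup) =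
      Nat.card (PS ⧸ (X ⊔ tS)) := by
    have : ((PS ⧸ X) ⧸ (LinearMap.range φ)) ≃ (PS ⧸ (X ⊔ tS)) := by
      rw [hrange]
      exact (Submodule.quotientQuotientEquivQuotient X (X ⊔ tS) le_sup_left).toEquiv
    exact Nat.card_congr this
  have h3 : Nat.card (LinearMap.range φ) = Nat.card (PS ⧸ Xt X) := by
    have := (LinearMap.quotKerEquivRange φ).toEquiv
    rw [hker] at this
    exact (Nat.card_congr this).symm
  calc idx X = Nat.card (PS ⧸ X) := rfl
    _ = _ := h1
    _ = mval X * idx (Xt X) := by rw [h2, h3]; rfl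


noncomputable def cI (X : Ideal PS) : Ideal ℤ := X.map (constantCoeff (R := ℤ))

lemma constantCoeff_surjective : Function.Surjective (constantCoeff (R := ℤ)) :=
  fun a => ⟨PowerSeries.C (R := ℤ) a, by simp⟩

lemma mem_cI {X : Ideal PS} {a : ℤ} : a ∈ cI X ↔ ∃ f ∈ X, constantCoeff (R := ℤ) f = a :=
  Ideal.mem_map_iff_of_surjective _ constantCoeff_surjective

lemma cconst_tS {s : PS} (hs : s ∈ tS) : constantCoeff (R := ℤ) s = 0 := by
  obtain ⟨g, rfl⟩ := mem_tS.1 hs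
  simp

lemma mval_eq_card (X : Ideal PS) : mval X = Nat.card (ℤ ⧸ cI X) := by
  set ψ : PS →+* ℤ ⧸ cI X := (Ideal.Quotient.mk (cI X)).comp (constantCoeff (R := ℤ)) with hψ
  have hsur : Function.Surjective ψ :=
    (Ideal.Quotient.mk_surjective).comp constantCoeff_surjective
  have hker : RingHom.ker ψ = X ⊔ tS := by
    ext f
    simp only [hψ, RingHom.mem_ker, RingHom.comp_apply, Ideal.Quotient.eq_zero_iff_mem]
    constructor
    · intro h
      obtain ⟨g, hg, hgc⟩ := mem_cI.1 h
      have hdvd : (PowerSeries.X : PS) ∣ (f - g) := by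
        rw [PowerSeries.X_dvd_iff]
        simp [hgc]
      obtain ⟨c, hc⟩ := hdvd
      have hfs : f = g + PowerSeries.X * c := by rw [← hc]; ring
      rw [hfs]
      exact Submodule.add_mem_sup hg (mem_tS.2 ⟨c, rfl⟩)
    · intro h
      obtain ⟨x, hx, s, hs, rfl⟩ := Submodule.mem_sup.1 h
      rw [map_add, cconst_tS hs, add_zero]
      exact mem_cI.2 ⟨x, hx, rfl⟩
  have := Nat.card_congr (RingHom.quotientKerEquivOfSurjective hsur).toEquiv
  rw [hker] at this
  exact this

lemma cI_eq_span (X : Ideal PS) : cI X = Ideal.span {(mval X : ℤ)} := by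
  obtain ⟨a, ha0⟩ := (IsPrincipalIdealRing.principal (cI X)).principal
  have ha : cI X = Ideal.span {a} := ha0
  have hm : mval X = a.natAbs := by
    rw [mval_eq_card, ha]
    rw [Nat.card_congr (Int.quotientSpanEquivZMod a).toEquiv, Nat.card_zmod]
  rw [ha, hm, Int.span_natAbs]

lemma exists_gen (X : Ideal PS) : ∃ g ∈ X, constantCoeff (R := ℤ) g = (mval X : ℤ) := by
  have : (mval X : ℤ) ∈ cI X := by
    rw [cI_eq_span]; exact Ideal.mem_span_singleton_self _
  exact mem_cI.1 this

lemma mval_dvd_const {X : Ideal PS} {f : PS} (hf : f ∈ X) :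
    (mval X : ℤ) ∣ constantCoeff (R := ℤ) f := by
  have : constantCoeff (R := ℤ) f ∈ cI X := mem_cI.2 ⟨f, hf, rfl⟩
  rwa [cI_eq_span, Ideal.mem_span_singleton] at this

lemma mval_dvd_mval {X Y : Ideal PS} (h : X ≤ Y) : mval Y ∣ mval X := by
  have hle : cI X ≤ cI Y := Ideal.map_mono h
  rw [cI_eq_span, cI_eq_span, Ideal.span_singleton_le_span_singleton] at hle
  exact_mod_cast hle

lemma mval_dvd_idx (X : Ideal PS) : mval X ∣ idx X := ⟨_, idx_eq_mval_mul X⟩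

lemma finite_quot_of_le {X Y : Ideal PS} (h : X ≤ Y) (hX : Finite (PS ⧸ X)) :
    Finite (PS ⧸ Y) := by
  apply Finite.of_surjective (Ideal.Quotient.factor h)
  intro y
  obtain ⟨x, rfl⟩ := Ideal.Quotient.mk_surjective y
  exact ⟨Ideal.Quotient.mk X x, rfl⟩

lemma mval_pos {X : Ideal PS} (h : idx X ≠ 0) : 0 < mval X := by
  have h1 : Finite (PS ⧸ X) := Nat.finite_of_card_ne_zero h
  have h2 : Finite (PS ⧸ (X ⊔ tS)) := finite_quot_of_le le_sup_left h1
  exact Nat.card_pos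

lemma idx_Xt_pos {X : Ideal PS} (h : idx X ≠ 0) : 0 < idx (Xt X) := by
  have h1 : Finite (PS ⧸ X) := Nat.finite_of_card_ne_zero h
  have h2 : Finite (PS ⧸ Xt X) := finite_quot_of_le (le_Xt X) h1
  exact Nat.card_pos

lemma idx_top : idx (⊤ : Ideal PS) = 1 := by
  rw [idx, Nat.card_eq_one_iff_unique]
  constructor
  · constructor
    intro a b
    obtain ⟨x, rfl⟩ := Ideal.Quotient.mk_surjective a
    obtain ⟨y, rfl⟩ := Ideal.Quotient.mk_surjective b
    exact Ideal.Quotient.eq.2 trivial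
  · infer_instance

lemma eq_top_of_idx_one {X : Ideal PS} (h : idx X = 1) : X = ⊤ := by
  rw [idx, Nat.card_eq_one_iff_unique] at h
  have := h.1
  have h1 : (Ideal.Quotient.mk X 1) = Ideal.Quotient.mk X 0 := Subsingleton.elim _ _
  have : (1 : PS) ∈ X := by
    have := Ideal.Quotient.eq.1 h1
    simpa using this
  exact Ideal.eq_top_iff_one X |>.2 this

lemma eq_top_of_mval_one {X : Ideal PS} (h : mval X = 1) : X = ⊤ := by
  obtain ⟨g, hg, hgc⟩ := exists_gen X
  rw [h] at hgc
  refine Ideal.eq_top_of_isUnit_mem X hg ?_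
  rw [PowerSeries.isUnit_iff_constantCoeff, hgc]
  exact isUnit_one

lemma mval_top : mval (⊤ : Ideal PS) = 1 := by
  have : (⊤ : Ideal PS) ⊔ tS = ⊤ := top_sup_eq _
  rw [mval, this, ← idx]
  exact idx_top


lemma card_int_quot (a : ℤ) : Nat.card (ℤ ⧸ Ideal.span {a}) = a.natAbs := by
  rw [Nat.card_congr (Int.quotientSpanEquivZMod a).toEquiv, Nat.card_zmod]

noncomputable def tI (Y : Ideal PS) : Ideal PS := Submodule.map mulT Y

lemma mem_tI {Y : Ideal PS} {x : PS} :
    x ∈ tI Y ↔ ∃ y ∈ Y, (PowerSeries.X : PS) * y = x := by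
  constructor
  · rintro ⟨y, hy, rfl⟩; exact ⟨y, hy, rfl⟩
  · rintro ⟨y, hy, rfl⟩; exact ⟨y, hy, rfl⟩

noncomputable def Xh (X' : Ideal PS) (k : ℕ) (g₀ h : PS) : Ideal PS :=
  Ideal.span {(k : PS) * g₀ + PowerSeries.X * h} ⊔ tI X'

lemma mem_Xh {X' : Ideal PS} {k : ℕ} {g₀ h x : PS} :
    x ∈ Xh X' k g₀ h ↔ ∃ a : PS, ∃ y ∈ X',
      x = a * ((k : PS) * g₀ + PowerSeries.X * h) + PowerSeries.X * y := by
  rw [Xh, Submodule.mem_sup]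
  constructor
  · rintro ⟨u, hu, v, hv, rfl⟩
    obtain ⟨a, rfl⟩ := Ideal.mem_span_singleton'.1 hu
    obtain ⟨y, hy, rfl⟩ := mem_tI.1 hv
    exact ⟨a, y, hy, rfl⟩
  · rintro ⟨a, y, hy, rfl⟩
    exact ⟨_, Ideal.mem_span_singleton'.2 ⟨a, rfl⟩, _, mem_tI.2 ⟨y, hy, rfl⟩, rfl⟩

section FiberLemmas

variable {X' : Ideal PS} {k : ℕ} {g₀ : PS}

lemma cf (hc : constantCoeff (R := ℤ) g₀ = (mval X' : ℤ)) (h : PS) :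
    constantCoeff (R := ℤ) ((k : PS) * g₀ + PowerSeries.X * h) = ((k * mval X' : ℕ) : ℤ) := by
  rw [map_add, map_mul, map_mul, PowerSeries.constantCoeff_X, zero_mul, add_zero, hc]
  push_cast
  simp

lemma f_mem (hg₀ : g₀ ∈ X') {h : PS} (hh : h ∈ Xt X') :
    (k : PS) * g₀ + PowerSeries.X * h ∈ X' :=
  X'.add_mem (X'.mul_mem_left _ hg₀) (mem_Xt.1 hh)

lemma f_mem_Xh {h : PS} : (k : PS) * g₀ + PowerSeries.X * h ∈ Xh X' k g₀ h :=
  mem_Xh.2 ⟨1, 0, X'.zero_mem, by ring⟩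

lemma tI_le_of_Xt {X : Ideal PS} (hX : Xt X = X') : tI X' ≤ X := by
  intro x hx
  obtain ⟨y, hy, rfl⟩ := mem_tI.1 hx
  exact mem_Xt.1 (hX ▸ hy : y ∈ Xt X)

lemma Xt_Xh (hg₀ : g₀ ∈ X') (hc : constantCoeff (R := ℤ) g₀ = (mval X' : ℤ))
    {h : PS} (hh : h ∈ Xt X') (hkm : (k * mval X' : ℕ) ≠ 0) :
    Xt (Xh X' k g₀ h) = X' := by
  apply le_antisymm
  · intro w hw
    obtain ⟨a, y, hy, heq⟩ := mem_Xh.1 (mem_Xt.1 hw)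
    have h0 : (0 : ℤ) = constantCoeff (R := ℤ) a * ((k * mval X' : ℕ) : ℤ) := by
      have := congrArg (constantCoeff (R := ℤ)) heq
      rwa [map_mul, PowerSeries.constantCoeff_X, zero_mul, map_add, map_mul, cf hc,
        map_mul, PowerSeries.constantCoeff_X, zero_mul, add_zero] at this
    have hca : constantCoeff (R := ℤ) a = 0 := by
      rcases mul_eq_zero.1 h0.symm with h' | h'
      · exact h'
      · exact absurd (by exact_mod_cast h') hkm
    obtain ⟨b, hb⟩ := PowerSeries.X_dvd_iff.2 hca
    have hw' : PowerSeries.X * w =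
        PowerSeries.X * (b * ((k : PS) * g₀ + PowerSeries.X * h) + y) := by
      rw [heq, hb]; ring
    have := mul_left_cancel₀ PowerSeries.X_ne_zero hw'
    rw [this]
    exact X'.add_mem (X'.mul_mem_left _ (f_mem hg₀ hh)) hy
  · intro w hw
    exact mem_Xt.2 (le_sup_right (α := Ideal PS) (mem_tI.2 ⟨w, hw, rfl⟩))

lemma cI_Xh (hg₀ : g₀ ∈ X') (hc : constantCoeff (R := ℤ) g₀ = (mval X' : ℤ)) {h : PS}
    (hh : h ∈ Xt X') :
    cI (Xh X' k g₀ h) = Ideal.span {((k * mval X' : ℕ) : ℤ)} := by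
  apply le_antisymm
  · intro z hz
    obtain ⟨x, hx, rfl⟩ := mem_cI.1 hz
    obtain ⟨a, y, hy, rfl⟩ := mem_Xh.1 hx
    rw [Ideal.mem_span_singleton]
    refine Dvd.intro_left (constantCoeff (R := ℤ) a) ?_
    rw [map_add, map_mul, cf hc, map_mul, PowerSeries.constantCoeff_X, zero_mul, add_zero]
  · rw [Ideal.span_le, Set.singleton_subset_iff]
    exact mem_cI.2 ⟨_, f_mem_Xh, cf hc h⟩

lemma mval_Xh (hg₀ : g₀ ∈ X') (hc : constantCoeff (R := ℤ) g₀ = (mval X' : ℤ)) {h : PS}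
    (hh : h ∈ Xt X') :
    mval (Xh X' k g₀ h) = k * mval X' := by
  rw [mval_eq_card, cI_Xh hg₀ hc hh, card_int_quot, Int.natAbs_natCast]

lemma Xh_surj (hg₀ : g₀ ∈ X') (hc : constantCoeff (R := ℤ) g₀ = (mval X' : ℤ))
    {X : Ideal PS} (hX : Xt X = X') (hm : mval X = k * mval X') :
    ∃ h₀ ∈ Xt X', Xh X' k g₀ h₀ = X := by
  obtain ⟨f₀, hf₀, hcf₀⟩ := exists_gen X
  have hXle : X ≤ X' := hX ▸ le_Xt X
  have hc0 : constantCoeff (R := ℤ) (f₀ - (k : PS) * g₀) = 0 := by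
    rw [map_sub, hcf₀, hm, map_mul, map_natCast, hc]
    push_cast
    ring
  obtain ⟨h₀, hh₀⟩ := PowerSeries.X_dvd_iff.2 hc0
  have hfeq : (k : PS) * g₀ + PowerSeries.X * h₀ = f₀ := by
    rw [← hh₀]; ring
  have hh₀X' : h₀ ∈ Xt X' := by
    rw [mem_Xt, ← hh₀]
    exact X'.sub_mem (hXle hf₀) (X'.mul_mem_left _ hg₀)
  refine ⟨h₀, hh₀X', le_antisymm ?_ ?_⟩
  · rw [Xh, sup_le_iff]
    constructor
    · rw [Ideal.span_le, Set.singleton_subset_iff]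
      rw [hfeq]
      exact hf₀
    · exact tI_le_of_Xt hX
  · intro x hx
    have hdvd : ((k * mval X' : ℕ) : ℤ) ∣ constantCoeff (R := ℤ) x := hm ▸ mval_dvd_const hx
    obtain ⟨z, hz⟩ := hdvd
    have hc1 : constantCoeff (R := ℤ) (x - PowerSeries.C (R := ℤ) z * f₀) = 0 := by
      rw [map_sub, map_mul, PowerSeries.constantCoeff_C, hcf₀, hm, hz]
      ring
    obtain ⟨w, hw⟩ := PowerSeries.X_dvd_iff.2 hc1
    have hwX' : w ∈ X' := by
      rw [← hX, mem_Xt, ← hw]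
      exact X.sub_mem hx (X.mul_mem_left _ hf₀)
    refine mem_Xh.2 ⟨PowerSeries.C (R := ℤ) z, w, hwX', ?_⟩
    rw [hfeq, ← hw]
    ring

lemma Xh_inj (hg₀ : g₀ ∈ X') (hc : constantCoeff (R := ℤ) g₀ = (mval X' : ℤ))
    {h₁ h₂ : PS} (hh₁ : h₁ ∈ Xt X') (hh₂ : h₂ ∈ Xt X')
    (hkm : (k * mval X' : ℕ) ≠ 0) (heq : Xh X' k g₀ h₁ = Xh X' k g₀ h₂) :
    h₁ - h₂ ∈ X' := by
  have hf₁ : (k : PS) * g₀ + PowerSeries.X * h₁ ∈ Xh X' k g₀ h₂ := heq ▸ f_mem_Xh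
  obtain ⟨a, y, hy, hE⟩ := mem_Xh.1 hf₁
  have h0 : ((k * mval X' : ℕ) : ℤ) = constantCoeff (R := ℤ) a * ((k * mval X' : ℕ) : ℤ) := by
    have := congrArg (constantCoeff (R := ℤ)) hE
    rwa [cf hc, map_add, map_mul, cf hc, map_mul, PowerSeries.constantCoeff_X, zero_mul,
      add_zero] at this
  have hca : constantCoeff (R := ℤ) a = 1 := by
    have : (constantCoeff (R := ℤ) a - 1) * ((k * mval X' : ℕ) : ℤ) = 0 := by linarith
    rcases mul_eq_zero.1 this with h' | h'
    · linarith
    · exact absurd (by exact_mod_cast h') hkm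
  have : constantCoeff (R := ℤ) (a - 1) = 0 := by rw [map_sub, hca]; simp
  obtain ⟨b, hb⟩ := PowerSeries.X_dvd_iff.2 this
  have hE2 : PowerSeries.X * (h₁ - h₂) =
      PowerSeries.X * (b * ((k : PS) * g₀ + PowerSeries.X * h₂) + y) := by
    have ha : a = 1 + PowerSeries.X * b := by rw [← hb]; ring
    rw [ha] at hE
    linear_combination hE
  have := mul_left_cancel₀ PowerSeries.X_ne_zero hE2
  rw [this]
  exact X'.add_mem (X'.mul_mem_left _ (f_mem hg₀ hh₂)) hy

lemma Xh_congr {h₁ h₂ : PS} (hd : h₁ - h₂ ∈ X') :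
    Xh X' k g₀ h₁ = Xh X' k g₀ h₂ := by
  have key : ∀ u v : PS, u - v ∈ X' → Xh X' k g₀ u ≤ Xh X' k g₀ v := by
    intro u v huv
    rw [Xh, sup_le_iff]
    constructor
    · rw [Ideal.span_le, Set.singleton_subset_iff]
      refine mem_Xh.2 ⟨1, u - v, huv, by ring⟩
    · exact le_sup_right
  have h21 : h₂ - h₁ ∈ X' := by simpa using X'.neg_mem hd
  exact le_antisymm (key _ _ hd) (key _ _ h21)

end FiberLemmas

lemma fiber_card (X' : Ideal PS) (hX' : idx X' ≠ 0) (m : ℕ) (hm : m ≠ 0) :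
    Nat.card {X : Ideal PS // Xt X = X' ∧ mval X = m} =
      if mval X' ∣ m then mval X' else 0 := by
  by_cases hdvd : mval X' ∣ m
  · rw [if_pos hdvd]
    obtain ⟨k, hk⟩ := hdvd
    have hkm : (k * mval X' : ℕ) = m := by rw [mul_comm]; exact hk.symm
    have hkm0 : (k * mval X' : ℕ) ≠ 0 := by rw [hkm]; exact hm
    obtain ⟨g₀, hg₀, hc⟩ := exists_gen X'
    set S : Submodule PS (Xt X') := Submodule.comap (Xt X').subtype X' with hS
    have memS : ∀ a : ↥(Xt X'), a ∈ S ↔ (a : PS) ∈ X' := fun a => Iff.rfl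
    set gt : ↥(Xt X') → {X : Ideal PS // Xt X = X' ∧ mval X = m} := fun h =>
      ⟨Xh X' k g₀ h, Xt_Xh hg₀ hc h.2 hkm0, by rw [mval_Xh hg₀ hc h.2, hkm]⟩ with hgt
    have resp : ∀ a b : ↥(Xt X'), Submodule.quotientRel S a b → gt a = gt b := by
      intro a b hab
      have h1 : a - b ∈ S := (Submodule.quotientRel_def S).1 hab
      have h2 : (a : PS) - b ∈ X' := by
        rw [memS] at h1
        simpa using h1
      exact Subtype.ext (Xh_congr h2)
    set F : (↥(Xt X') ⧸ S) → {X : Ideal PS // Xt X = X' ∧ mval X = m} :=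
      fun q => Quotient.liftOn q gt resp with hF
    have Fmk : ∀ a : ↥(Xt X'), F (Submodule.Quotient.mk a) = gt a := fun a => rfl
    have hsurj : Function.Surjective F := by
      rintro ⟨X, hXt, hmX⟩
      obtain ⟨h₀, hh₀, hXh⟩ := Xh_surj hg₀ hc hXt (by rw [hmX, ← hkm])
      exact ⟨Submodule.Quotient.mk ⟨h₀, hh₀⟩, Subtype.ext hXh⟩
    have hinj : Function.Injective F := by
      intro q₁ q₂ hq
      obtain ⟨a, rfl⟩ := Submodule.Quotient.mk_surjective S q₁
      obtain ⟨b, rfl⟩ := Submodule.Quotient.mk_surjective S q₂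
      rw [Fmk, Fmk] at hq
      have hXh : Xh X' k g₀ a = Xh X' k g₀ b := congrArg Subtype.val hq
      have hd : (a : PS) - b ∈ X' := Xh_inj hg₀ hc a.2 b.2 hkm0 hXh
      rw [Submodule.Quotient.eq]
      rw [memS]
      simpa using hd
    have hcardeq : Nat.card (↥(Xt X') ⧸ S) =
        Nat.card {X : Ideal PS // Xt X = X' ∧ mval X = m} :=
      Nat.card_congr (Equiv.ofBijective F ⟨hinj, hsurj⟩)
    have hQcard : Nat.card (↥(Xt X') ⧸ S) = mval X' := by
      set θ : ↥(Xt X') →ₗ[PS] PS ⧸ X' := X'.mkQ.comp (Xt X').subtype with hθ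
      have hker : LinearMap.ker θ = S := by
        rw [hθ, LinearMap.ker_comp, Submodule.ker_mkQ]
      have hrange : LinearMap.range θ = Submodule.map X'.mkQ (Xt X') := by
        rw [hθ, LinearMap.range_comp, Submodule.range_subtype]
      have h1 : Nat.card (PS ⧸ X') =
          Nat.card ((PS ⧸ X') ⧸ (LinearMap.range θ).toAddSubgroup) *
            Nat.card (LinearMap.range θ) :=
        AddSubgroup.card_eq_card_quotient_mul_card_addSubgroup _
      have h2 : Nat.card ((PS ⧸ X') ⧸ (LinearMap.range θ).toAddSubgroup) = idx (Xt X') := by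
        have e : ((PS ⧸ X') ⧸ (LinearMap.range θ)) ≃ (PS ⧸ Xt X') := by
          rw [hrange]
          exact (Submodule.quotientQuotientEquivQuotient X' (Xt X') (le_Xt X')).toEquiv
        exact Nat.card_congr e
      have h3 : Nat.card (LinearMap.range θ) = Nat.card (↥(Xt X') ⧸ S) := by
        rw [← hker]
        exact (Nat.card_congr (LinearMap.quotKerEquivRange θ).toEquiv).symm
      have hmain : mval X' * idx (Xt X') = idx (Xt X') * Nat.card (↥(Xt X') ⧸ S) := by
        rw [← idx_eq_mval_mul X']
        calc idx X' = Nat.card (PS ⧸ X') := rfl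
          _ = _ := h1
          _ = idx (Xt X') * Nat.card (↥(Xt X') ⧸ S) := by rw [h2, h3]
      have hpos : 0 < idx (Xt X') := idx_Xt_pos hX'
      have := hmain.symm
      rw [mul_comm (mval X') (idx (Xt X'))] at this
      exact (Nat.eq_of_mul_eq_mul_left hpos this).symm ▸ rfl
    rw [← hcardeq, hQcard]
  · rw [if_neg hdvd, Nat.card_eq_zero]
    left
    constructor
    rintro ⟨X, hXt, hmX⟩
    exact hdvd (hmX ▸ mval_dvd_mval (hXt ▸ le_Xt X))


lemma tpow_aux {X : Ideal PS} {n i j : ℕ} (hij : i < j) (hjn : j ≤ n)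
    (hmap : Ideal.Quotient.mk X ((PowerSeries.X : PS) ^ i) =
      Ideal.Quotient.mk X ((PowerSeries.X : PS) ^ j)) :
    (PowerSeries.X : PS) ^ n ∈ X := by
  have hsub : (PowerSeries.X : PS) ^ i - (PowerSeries.X : PS) ^ j ∈ X := by
    rw [← Ideal.Quotient.eq_zero_iff_mem, map_sub, hmap, sub_self]
  have hfac : (PowerSeries.X : PS) ^ i - (PowerSeries.X : PS) ^ j =
      (PowerSeries.X : PS) ^ i * (1 - (PowerSeries.X : PS) ^ (j - i)) := by
    rw [mul_sub, mul_one, ← pow_add]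
    congr 2
    omega
  have hu : IsUnit (1 - (PowerSeries.X : PS) ^ (j - i)) := by
    rw [PowerSeries.isUnit_iff_constantCoeff]
    rw [map_sub, map_one, map_pow, PowerSeries.constantCoeff_X, zero_pow (by omega : j - i ≠ 0),
      sub_zero]
    exact isUnit_one
  obtain ⟨b, hb⟩ := hu.exists_right_inv
  have hti : (PowerSeries.X : PS) ^ i ∈ X := by
    have h1 : (PowerSeries.X : PS) ^ i * (1 - (PowerSeries.X : PS) ^ (j - i)) ∈ X := by
      rw [← hfac]; exact hsub
    have h2 := X.mul_mem_right b h1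
    rwa [mul_assoc, hb, mul_one] at h2
  have : (PowerSeries.X : PS) ^ n = (PowerSeries.X : PS) ^ (n - i) * (PowerSeries.X : PS) ^ i := by
    rw [← pow_add]
    congr 1
    omega
  rw [this]
  exact X.mul_mem_left _ hti

lemma nat_mem_of_idx {X : Ideal PS} {n : ℕ} (hn : n ≠ 0) (h : idx X = n) :
    (n : PS) ∈ X := by
  have hfin : Finite (PS ⧸ X) := Nat.finite_of_card_ne_zero
    (by rw [show Nat.card (PS ⧸ X) = n from h]; exact hn)
  have hF : Fintype (PS ⧸ X) := Fintype.ofFinite _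
  have h1 : n • (Ideal.Quotient.mk X 1) = 0 := by
    rw [← h, idx, Nat.card_eq_fintype_card]
    exact card_nsmul_eq_zero
  have h2 : Ideal.Quotient.mk X ((n : PS)) = 0 := by
    rw [← h1, ← map_nsmul]
    congr 1
    simp
  exact Ideal.Quotient.eq_zero_iff_mem.1 h2

lemma tpow_mem_of_idx {X : Ideal PS} {n : ℕ} (hn : n ≠ 0) (h : idx X = n) :
    (PowerSeries.X : PS) ^ n ∈ X := by
  have hfin : Finite (PS ⧸ X) := Nat.finite_of_card_ne_zero
    (by rw [show Nat.card (PS ⧸ X) = n from h]; exact hn)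
  have hF : Fintype (PS ⧸ X) := Fintype.ofFinite _
  have hcard : Fintype.card (PS ⧸ X) < Fintype.card (Fin (n + 1)) := by
    rw [Fintype.card_fin, ← Nat.card_eq_fintype_card, ← idx, h]
    omega
  obtain ⟨i, j, hij, hmap⟩ := Fintype.exists_ne_map_eq_of_card_lt
    (fun i : Fin (n + 1) => Ideal.Quotient.mk X ((PowerSeries.X : PS) ^ (i : ℕ))) hcard
  rcases Nat.lt_or_ge (i : ℕ) (j : ℕ) with hlt | hge
  · exact tpow_aux hlt (by omega) hmap
  · have hlt : (j : ℕ) < (i : ℕ) := by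
      rcases Nat.lt_or_ge (j : ℕ) (i : ℕ) with h' | h'
      · exact h'
      · exact absurd (Fin.ext (by omega)) hij
    exact tpow_aux hlt (by omega) hmap.symm

noncomputable def Jn (n : ℕ) : Ideal PS :=
  Ideal.span {(n : PS)} ⊔ Ideal.span {(PowerSeries.X : PS) ^ n}

lemma Jn_le {X : Ideal PS} {n : ℕ} (hn : n ≠ 0) (h : idx X = n) : Jn n ≤ X := by
  rw [Jn, sup_le_iff]
  constructor
  · rw [Ideal.span_le, Set.singleton_subset_iff]
    exact nat_mem_of_idx hn h
  · rw [Ideal.span_le, Set.singleton_subset_iff]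
    exact tpow_mem_of_idx hn h

lemma finite_quot_Jn {n : ℕ} (hn : n ≠ 0) : Finite (PS ⧸ Jn n) := by
  haveI : NeZero n := ⟨hn⟩
  set g : PS →+ (Fin n → ZMod n) :=
    { toFun := fun f i => (((PowerSeries.coeff (R := ℤ) i) f : ℤ) : ZMod n)
      map_zero' := by funext i; simp
      map_add' := by intro x y; funext i; simp } with hg
  have hker : ∀ f : PS, f ∈ Jn n ↔ g f = 0 := by
    intro f
    constructor
    · intro hf
      obtain ⟨u, hu, v, hv, rfl⟩ := Submodule.mem_sup.1 hf
      obtain ⟨a, ha⟩ := Ideal.mem_span_singleton'.1 hu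
      obtain ⟨b, hb⟩ := Ideal.mem_span_singleton.1 hv
      funext i
      have hcu : (PowerSeries.coeff (R := ℤ) i) u = (PowerSeries.coeff (R := ℤ) i) a * (n : ℤ) := by
        rw [← ha]
        have : (n : PS) = PowerSeries.C (R := ℤ) (n : ℤ) := by simp
        rw [this, mul_comm, PowerSeries.coeff_C_mul, mul_comm]
      have hcv : (PowerSeries.coeff (R := ℤ) i) v = 0 := by
        have : (PowerSeries.X : PS) ^ n ∣ v := ⟨b, hb⟩
        exact (PowerSeries.X_pow_dvd_iff.1 this) i i.2
      show (((PowerSeries.coeff (R := ℤ) i) (u + v) : ℤ) : ZMod n) = 0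
      rw [map_add, hcu, hcv, add_zero]
      push_cast
      simp
    · intro hf
      have hdvd : ∀ i : ℕ, i < n → (n : ℤ) ∣ (PowerSeries.coeff (R := ℤ) i) f := by
        intro i hi
        have := congrFun hf ⟨i, hi⟩
        simpa [hg, ZMod.intCast_zmod_eq_zero_iff_dvd] using this
      set h' : PS := PowerSeries.mk (fun i => (PowerSeries.coeff (R := ℤ) i) f / (n : ℤ)) with hh'
      have hXdvd : (PowerSeries.X : PS) ^ n ∣ (f - (n : PS) * h') := by
        rw [PowerSeries.X_pow_dvd_iff]
        intro m hm
        have hcoeff : (PowerSeries.coeff (R := ℤ) m) ((n : PS) * h') = (PowerSeries.coeff (R := ℤ) m) f := by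
          have : (n : PS) = PowerSeries.C (R := ℤ) (n : ℤ) := by simp
          rw [this, PowerSeries.coeff_C_mul, hh', PowerSeries.coeff_mk]
          exact Int.mul_ediv_cancel' (hdvd m hm)
        rw [map_sub, hcoeff, sub_self]
      obtain ⟨w, hw⟩ := hXdvd
      have : f = (n : PS) * h' + (PowerSeries.X : PS) ^ n * w := by rw [← hw]; ring
      rw [this]
      exact Submodule.add_mem_sup (Ideal.mem_span_singleton'.2 ⟨h', mul_comm _ _⟩)
        (Ideal.mem_span_singleton.2 ⟨w, rfl⟩)
  set G : (PS ⧸ Jn n) → (Fin n → ZMod n) :=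
    fun q => QuotientAddGroup.lift (Jn n).toAddSubgroup g (fun x hx => (hker x).1 hx) q with hG
  apply Finite.of_injective G
  intro q₁ q₂ hq
  obtain ⟨x, rfl⟩ := Submodule.Quotient.mk_surjective (Jn n) q₁
  obtain ⟨y, rfl⟩ := Submodule.Quotient.mk_surjective (Jn n) q₂
  have hxy : g x = g y := hq
  have : g (x - y) = 0 := by rw [map_sub, hxy, sub_self]
  have hmem : x - y ∈ Jn n := (hker _).2 this
  exact (Submodule.Quotient.eq (Jn n)).2 hmem

lemma finite_ideals_quot {n : ℕ} (hn : n ≠ 0) : Finite (Ideal (PS ⧸ Jn n)) := by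
  have := finite_quot_Jn hn
  exact Finite.of_injective (fun I : Ideal (PS ⧸ Jn n) => (I : Set (PS ⧸ Jn n)))
    SetLike.coe_injective

lemma finite_idx_subtype {n : ℕ} (hn : n ≠ 0) : Finite {X : Ideal PS // idx X = n} := by
  have := finite_ideals_quot hn
  apply Finite.of_injective
    (fun X : {X : Ideal PS // idx X = n} =>
      Ideal.map (Ideal.Quotient.mk (Jn n)) X.1)
  intro X₁ X₂ hmapeq
  have hcomap : ∀ X : {X : Ideal PS // idx X = n},
      Ideal.comap (Ideal.Quotient.mk (Jn n)) (Ideal.map (Ideal.Quotient.mk (Jn n)) X.1) = X.1 := by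
    intro X
    rw [Ideal.comap_map_of_surjective _ Ideal.Quotient.mk_surjective]
    have : Ideal.comap (Ideal.Quotient.mk (Jn n)) ⊥ = Jn n := by
      rw [← RingHom.ker_eq_comap_bot, Ideal.mk_ker]
    rw [this]
    exact sup_eq_left.2 (Jn_le hn X.2)
  apply Subtype.ext
  have h' : Ideal.map (Ideal.Quotient.mk (Jn n)) X₁.1 =
      Ideal.map (Ideal.Quotient.mk (Jn n)) X₂.1 := hmapeq
  rw [← hcomap X₁, ← hcomap X₂, h']


noncomputable def Cnt (m d : ℕ) : ℕ := Nat.card {X : Ideal PS // mval X = m ∧ idx X = d}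

lemma Cnt_eq_zero {m d : ℕ} (hd : d ≠ 0) (h : ¬ m ∣ d) : Cnt m d = 0 := by
  rw [Cnt, Nat.card_eq_zero]
  left
  constructor
  rintro ⟨X, hm, hi⟩
  exact h (hm ▸ hi ▸ mval_dvd_idx X)

lemma Cnt_one_one : Cnt 1 1 = 1 := by
  rw [Cnt, Nat.card_eq_one_iff_unique]
  constructor
  · constructor
    rintro ⟨X₁, hm₁, _⟩ ⟨X₂, hm₂, _⟩
    apply Subtype.ext
    show X₁ = X₂
    rw [eq_top_of_mval_one hm₁, eq_top_of_mval_one hm₂]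
  · exact ⟨⟨⊤, mval_top, idx_top⟩⟩

lemma Cnt_one_ne {e : ℕ} (he : e ≠ 1) : Cnt 1 e = 0 := by
  rw [Cnt, Nat.card_eq_zero]
  left
  constructor
  rintro ⟨X, hm, hi⟩
  rw [eq_top_of_mval_one hm] at hi
  rw [idx_top] at hi
  exact he hi.symm

lemma card_partition {n : ℕ} (hn : n ≠ 0) :
    Nat.card {X : Ideal PS // idx X = n} = ∑ m ∈ n.divisors, Cnt m n := by
  classical
  letI : DecidableEq (Ideal PS) := Classical.decEq _
  have hfin : Finite {X : Ideal PS // idx X = n} := finite_idx_subtype hn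
  have hF : Fintype {X : Ideal PS // idx X = n} := Fintype.ofFinite _
  rw [Nat.card_eq_fintype_card, ← Finset.card_univ,
    Finset.card_eq_sum_card_fiberwise (f := fun X : {X : Ideal PS // idx X = n} => mval X.1)
      (t := n.divisors) (fun X _ => Nat.mem_divisors.2 ⟨by
        show mval (X : Ideal PS) ∣ n
        have h2 := mval_dvd_idx (X : Ideal PS)
        rwa [X.2] at h2, hn⟩)]
  refine Finset.sum_congr rfl fun m _ => ?_
  have e : {x : {X : Ideal PS // idx X = n} // mval x.1 = m} ≃
      {X : Ideal PS // mval X = m ∧ idx X = n} :=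
    { toFun := fun x => ⟨x.1.1, x.2, x.1.2⟩
      invFun := fun X => ⟨⟨X.1, X.2.2⟩, X.2.1⟩
      left_inv := fun x => rfl
      right_inv := fun X => rfl }
  rw [← Fintype.card_subtype, ← Nat.card_eq_fintype_card, Cnt]
  exact Nat.card_congr e

lemma Cnt_rec {m d' : ℕ} (hm : m ≠ 0) (hd' : d' ≠ 0) :
    Cnt m (m * d') = ∑ m'' ∈ d'.divisors, if m'' ∣ m then m'' * Cnt m'' d' else 0 := by
  classical
  letI : DecidableEq (Ideal PS) := Classical.decEq _
  have hmd : (m * d' : ℕ) ≠ 0 := Nat.mul_ne_zero hm hd'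
  have hβ : Finite {X : Ideal PS // mval X = m ∧ idx X = m * d'} := by
    have := finite_idx_subtype hmd
    refine Finite.of_injective
      (fun X : {X : Ideal PS // mval X = m ∧ idx X = m * d'} =>
        (⟨X.1, X.2.2⟩ : {X : Ideal PS // idx X = m * d'})) ?_
    intro a b h
    simp only [Subtype.mk.injEq] at h
    exact Subtype.ext h
  have hγ : Finite {X' : Ideal PS // idx X' = d'} := finite_idx_subtype hd'
  have hFβ : Fintype {X : Ideal PS // mval X = m ∧ idx X = m * d'} := Fintype.ofFinite _
  have hFγ : Fintype {X' : Ideal PS // idx X' = d'} := Fintype.ofFinite _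
  set G : {X : Ideal PS // mval X = m ∧ idx X = m * d'} → {X' : Ideal PS // idx X' = d'} :=
    fun X => ⟨Xt X.1, by
      have h1 : idx X.1 = mval X.1 * idx (Xt X.1) := idx_eq_mval_mul X.1
      rw [X.2.1, X.2.2] at h1
      exact (Nat.eq_of_mul_eq_mul_left (Nat.pos_of_ne_zero hm) h1.symm)⟩ with hG
  rw [Cnt, Nat.card_eq_fintype_card, ← Finset.card_univ,
    Finset.card_eq_sum_card_fiberwise (f := G) (t := Finset.univ) (fun _ _ => Finset.mem_univ _)]
  have hfib : ∀ X' : {X' : Ideal PS // idx X' = d'},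
      (Finset.univ.filter (fun b => G b = X')).card =
        if mval X'.1 ∣ m then mval X'.1 else 0 := by
    intro X'
    have e : {b : {X : Ideal PS // mval X = m ∧ idx X = m * d'} // G b = X'} ≃
        {X : Ideal PS // Xt X = X'.1 ∧ mval X = m} :=
      { toFun := fun b => ⟨b.1.1, congrArg Subtype.val b.2, b.1.2.1⟩
        invFun := fun X => ⟨⟨X.1, X.2.2, by
            rw [idx_eq_mval_mul X.1, X.2.2, X.2.1, X'.2]⟩, Subtype.ext X.2.1⟩
        left_inv := fun b => rfl
        right_inv := fun X => rfl }
    rw [← Fintype.card_subtype, ← Nat.card_eq_fintype_card,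
      ← fiber_card X'.1 (by rw [X'.2]; exact hd') m hm]
    exact Nat.card_congr e
  rw [Finset.sum_congr rfl (fun X' _ => hfib X')]
  rw [← Finset.sum_fiberwise_of_maps_to
    (g := fun X' : {X' : Ideal PS // idx X' = d'} => mval X'.1) (t := d'.divisors)
    (fun X' _ => Nat.mem_divisors.2 ⟨by
      show mval (X' : Ideal PS) ∣ d'
      have h2 := mval_dvd_idx (X' : Ideal PS)
      rwa [X'.2] at h2, hd'⟩)
    (fun X' => if mval X'.1 ∣ m then mval X'.1 else 0)]
  refine Finset.sum_congr rfl fun m'' hm'' => ?_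
  have hinner : ∀ X' ∈ Finset.univ.filter
      (fun X' : {X' : Ideal PS // idx X' = d'} => mval X'.1 = m''),
      (if mval X'.1 ∣ m then mval X'.1 else 0) = (if m'' ∣ m then m'' else 0) := by
    intro X' hX'
    have := (Finset.mem_filter.1 hX').2
    rw [this]
  rw [Finset.sum_congr rfl hinner, Finset.sum_const]
  have hcard : (Finset.univ.filter
      (fun X' : {X' : Ideal PS // idx X' = d'} => mval X'.1 = m'')).card = Cnt m'' d' := by
    have e : {x : {X' : Ideal PS // idx X' = d'} // mval x.1 = m''} ≃
        {X : Ideal PS // mval X = m'' ∧ idx X = d'} :=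
      { toFun := fun x => ⟨x.1.1, x.2, x.1.2⟩
        invFun := fun X => ⟨⟨X.1, X.2.2⟩, X.2.1⟩
        left_inv := fun x => rfl
        right_inv := fun X => rfl }
    rw [← Fintype.card_subtype, ← Nat.card_eq_fintype_card, Cnt]
    exact Nat.card_congr e
  rw [hcard, smul_eq_mul, mul_ite, mul_zero, mul_comm]


noncomputable def Ffun (j n : ℕ) : ℕ :=
  ∑ m ∈ n.divisors, ∑ d ∈ n.divisors,
    if m ^ (j - 1) * d = n then m ^ (j - 1) * Cnt m d else 0

lemma sum_pin {n c : ℕ} (hn : n ≠ 0) (hc : c ≠ 0) (f : ℕ → ℕ) :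
    (∑ d ∈ n.divisors, if c * d = n then f d else 0) = if c ∣ n then f (n / c) else 0 := by
  by_cases h : c ∣ n
  · rw [if_pos h]
    have hcongr : ∀ d ∈ n.divisors,
        (if c * d = n then f d else 0) = (if d = n / c then f d else 0) := by
      intro d _
      refine if_congr ⟨fun hcd => ?_, fun hd => ?_⟩ rfl rfl
      · rw [← hcd, Nat.mul_div_cancel_left d (Nat.pos_of_ne_zero hc)]
      · rw [hd, Nat.mul_div_cancel' h]
    rw [Finset.sum_congr rfl hcongr, Finset.sum_ite_eq' _ (n / c) f, if_pos]
    exact Nat.mem_divisors.2 ⟨⟨c, (Nat.div_mul_cancel h).symm⟩, hn⟩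
  · rw [if_neg h]
    apply Finset.sum_eq_zero
    intro d _
    exact if_neg (fun he => h ⟨d, he.symm⟩)

lemma stepA {j n : ℕ} (hj : j ≠ 0) (hn : n ≠ 0) :
    Ffun j n = ∑ m ∈ n.divisors, ∑ d' ∈ n.divisors,
      if m ^ j * d' = n then m ^ (j - 1) * Cnt m (m * d') else 0 := by
  rw [Ffun]
  refine Finset.sum_congr rfl fun m hm => ?_
  have hm0 : m ≠ 0 := (Nat.pos_of_mem_divisors hm).ne'
  have hmj1 : m ^ (j - 1) ≠ 0 := pow_ne_zero _ hm0
  have hmj : m ^ j ≠ 0 := pow_ne_zero _ hm0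
  rw [sum_pin hn hmj1 (fun d => m ^ (j - 1) * Cnt m d),
    sum_pin hn hmj (fun d' => m ^ (j - 1) * Cnt m (m * d'))]
  have hjj : m ^ (j - 1) * m = m ^ j := by
    rw [← pow_succ]
    congr 1
    omega
  by_cases h2 : m ^ j ∣ n
  · rw [if_pos h2, if_pos (dvd_trans (pow_dvd_pow m (by omega : j - 1 ≤ j)) h2)]
    congr 1
    obtain ⟨t, ht⟩ := h2
    have h1 : n / m ^ j = t := by rw [ht, Nat.mul_div_cancel_left t (Nat.pos_of_ne_zero hmj)]
    have h2' : n / m ^ (j - 1) = m * t := by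
      rw [ht, ← hjj, mul_assoc, Nat.mul_div_cancel_left _ (Nat.pos_of_ne_zero hmj1)]
    rw [h1, h2']
  · rw [if_neg h2]
    by_cases h1 : m ^ (j - 1) ∣ n
    · rw [if_pos h1]
      obtain ⟨t, ht⟩ := h1
      have htq : n / m ^ (j - 1) = t := by
        rw [ht, Nat.mul_div_cancel_left t (Nat.pos_of_ne_zero hmj1)]
      have hnd : ¬ m ∣ n / m ^ (j - 1) := by
        rw [htq]
        intro ⟨s, hs⟩
        exact h2 ⟨s, by rw [ht, hs, ← mul_assoc, hjj]⟩
      have ht0 : n / m ^ (j - 1) ≠ 0 := by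
        rw [htq]
        intro h0
        rw [h0, mul_zero] at ht
        exact hn ht
      rw [Cnt_eq_zero ht0 hnd, mul_zero]
    · rw [if_neg h1]


lemma lhs_triple {j n : ℕ} (hj : j ≠ 0) (hn : n ≠ 0) :
    Ffun j n = ∑ x ∈ (n.divisors ×ˢ (n.divisors ×ˢ n.divisors)).filter
        (fun x : ℕ × ℕ × ℕ => x.1 ^ j * x.2.1 = n ∧ x.2.2 ∣ x.1 ∧ x.2.2 ∣ x.2.1),
      x.1 ^ (j - 1) * (x.2.2 * Cnt x.2.2 x.2.1) := by
  rw [stepA hj hn, Finset.sum_filter,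
    Finset.sum_product' (s := n.divisors) (t := n.divisors ×ˢ n.divisors)
      (f := fun m p => if m ^ j * p.1 = n ∧ p.2 ∣ m ∧ p.2 ∣ p.1
        then m ^ (j - 1) * (p.2 * Cnt p.2 p.1) else 0)]
  refine Finset.sum_congr rfl fun m hm => ?_
  rw [Finset.sum_product' (s := n.divisors) (t := n.divisors)
      (f := fun d' m'' => if m ^ j * d' = n ∧ m'' ∣ m ∧ m'' ∣ d'
        then m ^ (j - 1) * (m'' * Cnt m'' d') else 0)]
  refine Finset.sum_congr rfl fun d' hd' => ?_
  have hm0 : m ≠ 0 := (Nat.pos_of_mem_divisors hm).ne'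
  have hd'0 : d' ≠ 0 := (Nat.pos_of_mem_divisors hd').ne'
  by_cases hc : m ^ j * d' = n
  · rw [if_pos hc, Cnt_rec hm0 hd'0, Finset.mul_sum]
    have e1 : ∀ m'' ∈ d'.divisors,
        m ^ (j - 1) * (if m'' ∣ m then m'' * Cnt m'' d' else 0)
          = if (m ^ j * d' = n ∧ m'' ∣ m ∧ m'' ∣ d')
              then m ^ (j - 1) * (m'' * Cnt m'' d') else 0 := by
      intro m'' hm''
      rw [mul_ite, mul_zero]
      exact if_congr ⟨fun h => ⟨hc, h, Nat.dvd_of_mem_divisors hm''⟩, fun h => h.2.1⟩ rfl rfl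
    rw [Finset.sum_congr rfl e1]
    apply Finset.sum_subset
      (Nat.divisors_subset_of_dvd hn (Nat.dvd_of_mem_divisors hd'))
    intro m'' _ hnot
    rw [if_neg]
    rintro ⟨-, -, hdd⟩
    exact hnot (Nat.mem_divisors.2 ⟨hdd, hd'0⟩)
  · rw [if_neg hc]
    symm
    exact Finset.sum_eq_zero fun m'' _ => if_neg (fun h => hc h.1)

lemma rhs_step2 {j n : ℕ} (hj : j ≠ 0) (hn : n ≠ 0) (g : ℕ → ℕ) :
    ∑ k ∈ n.divisors, zetaShifted j k * g (n / k)
      = ∑ κ ∈ n.divisors, if κ ^ j ∣ n then κ ^ (j - 1) * g (n / κ ^ j) else 0 := by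
  have expand : ∀ k ∈ n.divisors, zetaShifted j k * g (n / k)
      = ∑ κ ∈ Finset.range (n + 1),
          if (κ ^ j = k ∧ 1 ≤ κ) then κ ^ (j - 1) * g (n / k) else 0 := by
    intro k hk
    have hkn : k ≤ n := Nat.le_of_dvd (Nat.pos_of_ne_zero hn) (Nat.dvd_of_mem_divisors hk)
    rw [zetaShifted_apply, Finset.sum_mul]
    have e1 : ∀ κ ∈ Finset.range (k + 1),
        (if κ ^ j = k ∧ 1 ≤ κ then κ ^ (j - 1) else 0) * g (n / k)
          = if (κ ^ j = k ∧ 1 ≤ κ) then κ ^ (j - 1) * g (n / k) else 0 := by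
      intro κ _
      rw [ite_mul, zero_mul]
    rw [Finset.sum_congr rfl e1]
    apply Finset.sum_subset
      (Finset.range_subset_range.2 (by omega))
    intro κ hκn hκk
    rw [if_neg]
    rintro ⟨hpow, hone⟩
    have h1 : κ ≤ κ ^ j := Nat.le_self_pow hj κ
    rw [Finset.mem_range] at hκn hκk
    omega
  rw [Finset.sum_congr rfl expand, Finset.sum_comm]
  have inner : ∀ κ ∈ Finset.range (n + 1),
      (∑ k ∈ n.divisors, if (κ ^ j = k ∧ 1 ≤ κ) then κ ^ (j - 1) * g (n / k) else 0)
        = if (1 ≤ κ ∧ κ ^ j ∣ n) then κ ^ (j - 1) * g (n / κ ^ j) else 0 := by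
    intro κ _
    by_cases hκ : 1 ≤ κ
    · have e2 : ∀ k ∈ n.divisors,
          (if (κ ^ j = k ∧ 1 ≤ κ) then κ ^ (j - 1) * g (n / k) else 0)
            = if k = κ ^ j then κ ^ (j - 1) * g (n / k) else 0 := fun k _ =>
        if_congr ⟨fun h => h.1.symm, fun h => ⟨h.symm, hκ⟩⟩ rfl rfl
      rw [Finset.sum_congr rfl e2,
        Finset.sum_ite_eq' n.divisors (κ ^ j) (fun k => κ ^ (j - 1) * g (n / k))]
      by_cases hd : κ ^ j ∣ n
      · rw [if_pos (Nat.mem_divisors.2 ⟨hd, hn⟩), if_pos ⟨hκ, hd⟩]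
      · rw [if_neg (fun hmem => hd (Nat.mem_divisors.1 hmem).1), if_neg (fun h => hd h.2)]
    · rw [if_neg (fun h => hκ h.1)]
      exact Finset.sum_eq_zero fun k _ => if_neg (fun h => hκ h.2)
  rw [Finset.sum_congr rfl inner]
  have hsub : n.divisors ⊆ Finset.range (n + 1) := fun d hd =>
    Finset.mem_range.2 (Nat.lt_succ_of_le
      (Nat.le_of_dvd (Nat.pos_of_ne_zero hn) (Nat.dvd_of_mem_divisors hd)))
  rw [← Finset.sum_subset hsub ?van]
  case van =>
    intro κ _ hκnot
    rw [if_neg]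
    rintro ⟨hone, hdvd⟩
    exact hκnot (Nat.mem_divisors.2 ⟨dvd_trans (dvd_pow_self κ hj) hdvd, hn⟩)
  refine Finset.sum_congr rfl fun κ hκ => ?_
  exact if_congr (and_iff_right (Nat.pos_of_mem_divisors hκ)) rfl rfl


lemma rhs_triple {j n : ℕ} (hj : j ≠ 0) (hn : n ≠ 0) :
    (∑ p ∈ n.divisorsAntidiagonal, zetaShifted j p.1 * Ffun (j + 1) p.2)
      = ∑ y ∈ (n.divisors ×ˢ (n.divisors ×ˢ n.divisors)).filter
          (fun y : ℕ × ℕ × ℕ => y.1 ^ j ∣ n ∧ y.2.1 ^ j * y.2.2 = n / y.1 ^ j),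
        y.1 ^ (j - 1) * (y.2.1 ^ j * Cnt y.2.1 y.2.2) := by
  rw [Nat.sum_divisorsAntidiagonal (fun k e => zetaShifted j k * Ffun (j + 1) e),
    rhs_step2 hj hn (Ffun (j + 1)), Finset.sum_filter,
    Finset.sum_product' (s := n.divisors) (t := n.divisors ×ˢ n.divisors)
      (f := fun κ q => if κ ^ j ∣ n ∧ q.1 ^ j * q.2 = n / κ ^ j
        then κ ^ (j - 1) * (q.1 ^ j * Cnt q.1 q.2) else 0)]
  refine Finset.sum_congr rfl fun κ hκ => ?_
  rw [Finset.sum_product' (s := n.divisors) (t := n.divisors)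
      (f := fun m'' d' => if κ ^ j ∣ n ∧ m'' ^ j * d' = n / κ ^ j
        then κ ^ (j - 1) * (m'' ^ j * Cnt m'' d') else 0)]
  by_cases hd : κ ^ j ∣ n
  case neg =>
    rw [if_neg hd]
    symm
    apply Finset.sum_eq_zero
    intro m'' _
    exact Finset.sum_eq_zero fun d' _ => if_neg (fun h => hd h.1)
  case pos =>
    rw [if_pos hd]
    have hκ0 : κ ≠ 0 := (Nat.pos_of_mem_divisors hκ).ne'
    have hκj0 : κ ^ j ≠ 0 := pow_ne_zero _ hκ0
    have he0 : n / κ ^ j ≠ 0 :=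
      (Nat.div_pos (Nat.le_of_dvd (Nat.pos_of_ne_zero hn) hd)
        (Nat.pos_of_ne_zero hκj0)).ne'
    have hedvd : n / κ ^ j ∣ n := ⟨κ ^ j, by rw [Nat.div_mul_cancel hd]⟩
    have hexp : Ffun (j + 1) (n / κ ^ j) = ∑ m'' ∈ (n / κ ^ j).divisors,
        ∑ d' ∈ (n / κ ^ j).divisors,
          if m'' ^ j * d' = n / κ ^ j then m'' ^ j * Cnt m'' d' else 0 := by
      rw [Ffun]
      simp only [Nat.add_sub_cancel]
    rw [hexp, Finset.mul_sum]
    have inner1 : ∀ m'' ∈ (n / κ ^ j).divisors,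
        (κ ^ (j - 1) * ∑ d' ∈ (n / κ ^ j).divisors,
          if m'' ^ j * d' = n / κ ^ j then m'' ^ j * Cnt m'' d' else 0)
        = ∑ d' ∈ n.divisors,
            if κ ^ j ∣ n ∧ m'' ^ j * d' = n / κ ^ j
              then κ ^ (j - 1) * (m'' ^ j * Cnt m'' d') else 0 := by
      intro m'' _
      rw [Finset.mul_sum]
      have congr1 : ∀ d' ∈ (n / κ ^ j).divisors,
          κ ^ (j - 1) * (if m'' ^ j * d' = n / κ ^ j then m'' ^ j * Cnt m'' d' else 0)
            = if κ ^ j ∣ n ∧ m'' ^ j * d' = n / κ ^ j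
                then κ ^ (j - 1) * (m'' ^ j * Cnt m'' d') else 0 := by
        intro d' _
        rw [mul_ite, mul_zero]
        exact if_congr ⟨fun h => ⟨hd, h⟩, fun h => h.2⟩ rfl rfl
      rw [Finset.sum_congr rfl congr1]
      apply Finset.sum_subset (Nat.divisors_subset_of_dvd hn hedvd)
      intro d' _ hnot
      rw [if_neg]
      rintro ⟨-, hcond⟩
      exact hnot (Nat.mem_divisors.2 ⟨⟨m'' ^ j, by rw [← hcond]; ring⟩, he0⟩)
    rw [Finset.sum_congr rfl inner1]
    apply Finset.sum_subset (Nat.divisors_subset_of_dvd hn hedvd)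
    intro m'' _ hnot
    apply Finset.sum_eq_zero
    intro d' _
    rw [if_neg]
    rintro ⟨-, hcond⟩
    exact hnot (Nat.mem_divisors.2 ⟨dvd_trans (dvd_pow_self m'' hj) ⟨d', hcond.symm⟩, he0⟩)

lemma rhs_dvd_filter {j n : ℕ} (hj : j ≠ 0) (hn : n ≠ 0) :
    (∑ y ∈ (n.divisors ×ˢ (n.divisors ×ˢ n.divisors)).filter
        (fun y : ℕ × ℕ × ℕ => y.1 ^ j ∣ n ∧ y.2.1 ^ j * y.2.2 = n / y.1 ^ j),
      y.1 ^ (j - 1) * (y.2.1 ^ j * Cnt y.2.1 y.2.2))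
    = ∑ y ∈ (n.divisors ×ˢ (n.divisors ×ˢ n.divisors)).filter
        (fun y : ℕ × ℕ × ℕ =>
          (y.1 ^ j ∣ n ∧ y.2.1 ^ j * y.2.2 = n / y.1 ^ j) ∧ y.2.1 ∣ y.2.2),
      y.1 ^ (j - 1) * (y.2.1 ^ j * Cnt y.2.1 y.2.2) := by
  rw [Finset.sum_filter, Finset.sum_filter]
  refine Finset.sum_congr rfl fun y hy => ?_
  by_cases hdd : y.2.1 ∣ y.2.2
  · by_cases hP : (y.1 ^ j ∣ n ∧ y.2.1 ^ j * y.2.2 = n / y.1 ^ j)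
    · rw [if_pos hP, if_pos ⟨hP, hdd⟩]
    · rw [if_neg hP, if_neg (fun h => hP h.1)]
  · by_cases hP : (y.1 ^ j ∣ n ∧ y.2.1 ^ j * y.2.2 = n / y.1 ^ j)
    · rw [if_pos hP, if_neg (fun h => hdd h.2)]
      have hy1 : 0 < y.1 := by
        rw [Finset.mem_product] at hy
        exact Nat.pos_of_mem_divisors hy.1
      have hd'0 : y.2.2 ≠ 0 := by
        intro h0
        have h2 := hP.2
        rw [h0, mul_zero] at h2
        have hpos : 0 < n / y.1 ^ j :=
          Nat.div_pos (Nat.le_of_dvd (Nat.pos_of_ne_zero hn) hP.1)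
            (pow_pos hy1 j)
        omega
      rw [Cnt_eq_zero hd'0 hdd, mul_zero, mul_zero]
    · rw [if_neg hP, if_neg (fun h => hP h.1)]

lemma triple_bridge {j n : ℕ} (hj : j ≠ 0) (hn : n ≠ 0) :
    (∑ x ∈ (n.divisors ×ˢ (n.divisors ×ˢ n.divisors)).filter
        (fun x : ℕ × ℕ × ℕ => x.1 ^ j * x.2.1 = n ∧ x.2.2 ∣ x.1 ∧ x.2.2 ∣ x.2.1),
      x.1 ^ (j - 1) * (x.2.2 * Cnt x.2.2 x.2.1))
    = ∑ y ∈ (n.divisors ×ˢ (n.divisors ×ˢ n.divisors)).filter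
        (fun y : ℕ × ℕ × ℕ =>
          (y.1 ^ j ∣ n ∧ y.2.1 ^ j * y.2.2 = n / y.1 ^ j) ∧ y.2.1 ∣ y.2.2),
      y.1 ^ (j - 1) * (y.2.1 ^ j * Cnt y.2.1 y.2.2) := by
  have hnpos : 0 < n := Nat.pos_of_ne_zero hn
  refine Finset.sum_nbij' (fun x : ℕ × ℕ × ℕ => (x.1 / x.2.2, x.2.2, x.2.1))
    (fun y : ℕ × ℕ × ℕ => (y.1 * y.2.1, y.2.2, y.2.1)) ?_ ?_ ?_ ?_ ?_
  · -- forward membership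
    intro x hx
    simp only [Finset.mem_filter, Finset.mem_product, Nat.mem_divisors] at hx ⊢
    obtain ⟨⟨⟨hmn, -⟩, ⟨hd'n, -⟩, ⟨hm''n, -⟩⟩, hcond, hm''m, hm''d'⟩ := hx
    have hm0 : x.1 ≠ 0 := fun h => hn (by simpa [h] using hmn)
    have hm''0 : x.2.2 ≠ 0 := fun h => hn (by simpa [h] using hm''n)
    have hκm : x.1 / x.2.2 * x.2.2 = x.1 := Nat.div_mul_cancel hm''m
    have hκ0 : x.1 / x.2.2 ≠ 0 := by
      intro h0
      rw [h0, zero_mul] at hκm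
      exact hm0 hκm.symm
    have hκdvd : x.1 / x.2.2 ∣ x.1 := ⟨x.2.2, hκm.symm⟩
    have hmjn : x.1 ^ j ∣ n := ⟨x.2.1, hcond.symm⟩
    have hκjn : (x.1 / x.2.2) ^ j ∣ n := dvd_trans (pow_dvd_pow_of_dvd hκdvd j) hmjn
    have hsplit : n = (x.1 / x.2.2) ^ j * (x.2.2 ^ j * x.2.1) := by
      rw [← hcond, ← mul_assoc, ← mul_pow, hκm]
    refine ⟨⟨⟨dvd_trans hκdvd hmn, hn⟩, ⟨hm''n, hn⟩, hd'n, hn⟩, ⟨hκjn, ?_⟩, hm''d'⟩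
    rw [hsplit, Nat.mul_div_cancel_left _ (Nat.pos_of_ne_zero (pow_ne_zero _ hκ0))]
  · -- backward membership
    intro y hy
    simp only [Finset.mem_filter, Finset.mem_product, Nat.mem_divisors] at hy ⊢
    obtain ⟨⟨⟨hκn, -⟩, ⟨hm''n, -⟩, ⟨hd'n, -⟩⟩, ⟨hκjn, hcond⟩, hm''d'⟩ := hy
    have hκ0 : y.1 ≠ 0 := fun h => hn (by simpa [h] using hκn)
    have hm''0 : y.2.1 ≠ 0 := fun h => hn (by simpa [h] using hm''n)
    have hprod : (y.1 * y.2.1) ^ j * y.2.2 = n := by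
      rw [mul_pow, mul_assoc, hcond, Nat.mul_div_cancel' hκjn]
    refine ⟨⟨⟨?_, hn⟩, ⟨hd'n, hn⟩, hm''n, hn⟩, hprod, dvd_mul_left y.2.1 y.1, hm''d'⟩
    exact dvd_trans (dvd_pow_self _ hj) ⟨y.2.2, hprod.symm⟩
  · -- left inverse
    intro x hx
    simp only [Finset.mem_filter, Finset.mem_product, Nat.mem_divisors] at hx
    obtain ⟨-, -, hm''m, -⟩ := hx
    have : x.1 / x.2.2 * x.2.2 = x.1 := Nat.div_mul_cancel hm''m
    ext <;> simp [this]
  · -- right inverse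
    intro y hy
    simp only [Finset.mem_filter, Finset.mem_product, Nat.mem_divisors] at hy
    obtain ⟨⟨-, ⟨hm''n, -⟩, -⟩, -, -⟩ := hy
    have hm''0 : 0 < y.2.1 := Nat.pos_of_dvd_of_pos hm''n hnpos
    have : y.1 * y.2.1 / y.2.1 = y.1 := Nat.mul_div_cancel _ hm''0
    ext <;> simp [this]
  · -- summand equality
    intro x hx
    simp only [Finset.mem_filter, Finset.mem_product, Nat.mem_divisors] at hx
    obtain ⟨⟨⟨hmn, -⟩, -, -⟩, hcond, hm''m, -⟩ := hx
    have hκm : x.1 / x.2.2 * x.2.2 = x.1 := Nat.div_mul_cancel hm''m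
    have hjj : x.2.2 ^ (j - 1) * x.2.2 = x.2.2 ^ j := by
      rw [← pow_succ]
      congr 1
      omega
    calc x.1 ^ (j - 1) * (x.2.2 * Cnt x.2.2 x.2.1)
        = (x.1 / x.2.2 * x.2.2) ^ (j - 1) * (x.2.2 * Cnt x.2.2 x.2.1) := by rw [hκm]
      _ = (x.1 / x.2.2) ^ (j - 1) * (x.2.2 ^ (j - 1) * x.2.2) * Cnt x.2.2 x.2.1 := by
          rw [mul_pow]; ring
      _ = (x.1 / x.2.2) ^ (j - 1) * (x.2.2 ^ j * Cnt x.2.2 x.2.1) := by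
          rw [hjj]; ring

lemma Frec {j n : ℕ} (hj : j ≠ 0) (hn : n ≠ 0) :
    Ffun j n = ∑ p ∈ n.divisorsAntidiagonal, zetaShifted j p.1 * Ffun (j + 1) p.2 := by
  rw [lhs_triple hj hn, rhs_triple hj hn, rhs_dvd_filter hj hn]
  exact triple_bridge hj hn


lemma Ffun_one {n : ℕ} (hn : n ≠ 0) :
    Ffun 1 n = Nat.card {X : Ideal PS // idx X = n} := by
  rw [Ffun, card_partition hn]
  refine Finset.sum_congr rfl fun m hm => ?_
  simp only [Nat.sub_self, pow_zero, one_mul]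
  rw [Finset.sum_ite_eq' n.divisors n (fun d => Cnt m d),
    if_pos (Nat.mem_divisors.2 ⟨dvd_refl n, hn⟩)]

lemma Ffun_term {K e : ℕ} (he : e ≠ 0) (hlt : e < 2 ^ (K + 1)) :
    Ffun (K + 1) e = if e = 1 then 1 else 0 := by
  have h1 : Ffun (K + 1) e = Cnt 1 e := by
    rw [Ffun]
    simp only [Nat.add_sub_cancel]
    rw [Finset.sum_eq_single 1]
    · simp only [one_pow, one_mul]
      rw [Finset.sum_ite_eq' e.divisors e (fun d => Cnt 1 d),
        if_pos (Nat.mem_divisors.2 ⟨dvd_refl e, he⟩)]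
    · intro m hm hm1
      apply Finset.sum_eq_zero
      intro d hd
      have hm2 : 2 ≤ m := by
        have := Nat.pos_of_mem_divisors hm
        omega
      have hd0 : d ≠ 0 := (Nat.pos_of_mem_divisors hd).ne'
      by_cases hC : Cnt m d = 0
      · rw [hC, mul_zero, ite_self]
      · have hmd : m ∣ d := by
          by_contra hnd
          exact hC (Cnt_eq_zero hd0 hnd)
        have hdm : m ≤ d := Nat.le_of_dvd (Nat.pos_of_ne_zero hd0) hmd
        rw [if_neg]
        intro hcond
        have h2K : 2 ^ K ≤ m ^ K := Nat.pow_le_pow_left hm2 K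
        have hbig : 2 ^ K * 2 ≤ m ^ K * d := Nat.mul_le_mul h2K (by omega)
        rw [hcond] at hbig
        rw [pow_succ] at hlt
        omega
    · intro h1mem
      exact absurd (Nat.mem_divisors.2 ⟨one_dvd e, he⟩) h1mem
  rw [h1]
  by_cases he1 : e = 1
  · rw [he1, if_pos rfl, Cnt_one_one]
  · rw [if_neg he1, Cnt_one_ne he1]

noncomputable def FA (j : ℕ) : ArithmeticFunction ℕ :=
  ⟨fun n => if n = 0 then 0 else Ffun j n, by simp⟩

lemma FA_apply {j n : ℕ} (hn : n ≠ 0) : FA j n = Ffun j n := by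
  show (if n = 0 then 0 else Ffun j n) = Ffun j n
  rw [if_neg hn]

lemma FA_rec {j : ℕ} (hj : j ≠ 0) : FA j = zetaShifted j * FA (j + 1) := by
  ext n
  by_cases hn : n = 0
  · rw [hn]
    simp
  · rw [ArithmeticFunction.mul_apply, FA_apply hn, Frec hj hn]
    refine Finset.sum_congr rfl fun p hp => ?_
    have hp2 : p.2 ≠ 0 := by
      rw [Nat.mem_divisorsAntidiagonal] at hp
      intro h0
      rw [h0, mul_zero] at hp
      exact hp.2 hp.1.symm
    rw [FA_apply hp2]

lemma FA_key (K : ℕ) : FA 1 = (∏ j ∈ Finset.Icc 1 K, zetaShifted j) * FA (K + 1) := by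
  induction K with
  | zero =>
    rw [Finset.Icc_eq_empty (by omega), Finset.prod_empty, one_mul]
  | succ K ih =>
    rw [Finset.prod_Icc_succ_top (by omega), ih, FA_rec (j := K + 1) (by omega), mul_assoc]

end Stmt17

/-- Rossmann's formula: with `a n` the number of finite-index ideals
`X ⊆ ℤ[[t]]` of index `n`, the formal Dirichlet series identity
`∑_n a_n n^{-s} = ∏_{j=1}^∞ ζ(js - j + 1)` holds; since the `j`-th factor is trivial on
`n < 2^j`, this says each coefficient is computed by any sufficiently long partial
(Dirichlet-convolution) product. -/
theorem stmt_17 (a : ℕ → ℕ)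
    (ha : ∀ n : ℕ, a n =
      Nat.card {X : Ideal (PowerSeries ℤ) // Nat.card (PowerSeries ℤ ⧸ X) = n}) :
    ∀ K n : ℕ, 1 ≤ n → n < 2 ^ (K + 1) →
      (∏ j ∈ Finset.Icc 1 K, zetaShifted j) n = a n := by
  intro K n hn1 hnlt
  have hn0 : n ≠ 0 := by omega
  have h1 : a n = Stmt17.Ffun 1 n := by
    rw [ha n]
    have h2 : Nat.card {X : Ideal (PowerSeries ℤ) // Nat.card (PowerSeries ℤ ⧸ X) = n}
        = Nat.card {X : Ideal Stmt17.PS // Stmt17.idx X = n} := rfl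
    rw [h2, ← Stmt17.Ffun_one hn0]
  have h3 : a n = Stmt17.FA 1 n := by rw [h1, Stmt17.FA_apply hn0]
  have h4 := congrArg (fun f : ArithmeticFunction ℕ => f n) (Stmt17.FA_key K)
  rw [h3, h4, ArithmeticFunction.mul_apply]
  rw [Nat.sum_divisorsAntidiagonal
    (fun k e => (∏ j ∈ Finset.Icc 1 K, zetaShifted j) k * Stmt17.FA (K + 1) e)]
  rw [Finset.sum_eq_single n]
  · have hnn : n / n = 1 := Nat.div_self (by omega)
    rw [hnn, Stmt17.FA_apply one_ne_zero, Stmt17.Ffun_term one_ne_zero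
      (by have := Nat.one_le_two_pow (n := K + 1); omega), if_pos rfl, mul_one]
  · intro d hd hdn
    have hddvd : d ∣ n := Nat.dvd_of_mem_divisors hd
    have hd0 : 0 < d := Nat.pos_of_mem_divisors hd
    have hq0 : n / d ≠ 0 := (Nat.div_pos (Nat.le_of_dvd (by omega) hddvd) hd0).ne'
    have hqlt : n / d < 2 ^ (K + 1) := by
      have : n / d ≤ n := Nat.div_le_self n d
      omega
    rw [Stmt17.FA_apply hq0, Stmt17.Ffun_term hq0 hqlt, if_neg, mul_zero]
    intro heq1
    apply hdn
    have := Nat.div_mul_cancel hddvd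
    rw [heq1, one_mul] at this
    exact this
  · intro hnmem
    exact absurd (Nat.mem_divisors.2 ⟨dvd_refl n, hn0⟩) hnmem
end

section
/- Let R be a left arithmetical ring: every simple left R-module is finite and finitely presented, and for each n there are finitely many isomorphism classes of simple left R-modules of cardinality n. Then for every finitely generated left R-module M and every positive integer n, the set of submodules X ⊆ M with |M/X| = n is finite. -/
section Aux

universe u

variable {R : Type u} [Ring R]

/-- Hom from a f.g. module to a finite module is finite. -/
lemma aux_hom_finite (M S : Type*) [AddCommGroup M] [Module R M] [AddCommGroup S] [Module R S]
    [Module.Finite R M] [Finite S] : Finite (M →ₗ[R] S) := by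
  obtain ⟨s, hs⟩ := Module.Finite.fg_top (R := R) (M := M)
  refine Finite.of_injective (fun f : M →ₗ[R] S => (fun x : s => f x)) ?_
  intro f g h
  refine LinearMap.ext_on hs fun x hx => ?_
  exact congrFun h ⟨x, hx⟩

/-- Index multiplicativity for nested submodules. -/
lemma aux_card_mul {M : Type*} [AddCommGroup M] [Module R M]
    (X Y : Submodule R M) (h : X ≤ Y) :
    Nat.card (M ⧸ X) = Nat.card (Y ⧸ X.comap Y.subtype) * Nat.card (M ⧸ Y) := by
  have hker : LinearMap.ker (X.mkQ ∘ₗ Y.subtype) = X.comap Y.subtype := by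
    rw [LinearMap.ker_comp, Submodule.ker_mkQ]
  have hrange : LinearMap.range (X.mkQ ∘ₗ Y.subtype) = Y.map X.mkQ := by
    rw [LinearMap.range_comp, Submodule.range_subtype]
  have e : (Y ⧸ X.comap Y.subtype) ≃ₗ[R] (Y.map X.mkQ : Submodule R (M ⧸ X)) :=
    (Submodule.quotEquivOfEq _ _ hker.symm) ≪≫ₗ
      (X.mkQ ∘ₗ Y.subtype).quotKerEquivRange ≪≫ₗ (LinearEquiv.ofEq _ _ hrange)
  rw [← Submodule.card_quotient_mul_card_quotient Y X h, Nat.card_congr e.toEquiv]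

/-- The set of maximal submodules of given finite index is finite. -/
lemma aux_coatoms_finite
    (hiso : ∀ n : ℕ, ∃ T : Set (Submodule R R), T.Finite ∧
      ∀ m : Submodule R R, IsCoatom m → Nat.card (R ⧸ m) = n →
        ∃ m' ∈ T, Nonempty ((R ⧸ m) ≃ₗ[R] (R ⧸ m')))
    (M : Type u) [AddCommGroup M] [Module R M] [Module.Finite R M] (m : ℕ) (hm : 1 ≤ m) :
    {Y : Submodule R M | IsCoatom Y ∧ Nat.card (M ⧸ Y) = m}.Finite := by
  obtain ⟨T, hT, hT2⟩ := hiso m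
  have key : {Y : Submodule R M | IsCoatom Y ∧ Nat.card (M ⧸ Y) = m} ⊆
      ⋃ I ∈ {I ∈ T | Nat.card (R ⧸ I) = m},
        Set.range (fun f : M →ₗ[R] R ⧸ I => LinearMap.ker f) := by
    rintro Y ⟨hY, hcard⟩
    haveI : IsSimpleModule R (M ⧸ Y) := isSimpleModule_iff_isCoatom.mpr hY
    obtain ⟨I0, hI0, ⟨e⟩⟩ := isSimpleModule_iff_quot_maximal.mp
      (inferInstance : IsSimpleModule R (M ⧸ Y))
    have hI0card : Nat.card (R ⧸ I0) = m := by
      rw [← Nat.card_congr e.toEquiv, hcard]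
    obtain ⟨I, hIT, ⟨e2⟩⟩ := hT2 I0 hI0.out hI0card
    have e3 : (M ⧸ Y) ≃ₗ[R] R ⧸ I := e ≪≫ₗ e2
    refine Set.mem_biUnion (show I ∈ {I ∈ T | Nat.card (R ⧸ I) = m} from
      ⟨hIT, by rw [← Nat.card_congr e2.toEquiv, hI0card]⟩) ?_
    refine ⟨e3.toLinearMap ∘ₗ Y.mkQ, ?_⟩
    show LinearMap.ker (e3.toLinearMap ∘ₗ Y.mkQ) = Y
    rw [LinearMap.ker_comp, LinearEquiv.ker, Submodule.comap_bot, Submodule.ker_mkQ]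
  refine Set.Finite.subset (Set.Finite.biUnion (hT.subset (Set.sep_subset _ _)) ?_) key
  rintro I ⟨-, hIcard⟩
  haveI : Finite (R ⧸ I) := Nat.finite_of_card_ne_zero (by omega)
  haveI : Finite (M →ₗ[R] R ⧸ I) := aux_hom_finite M (R ⧸ I)
  exact Set.finite_range _

end Aux

/-- Let `R` be a left arithmetical ring: every simple left `R`-module is
finite and finitely presented, and for each `n` there are only finitely many isomorphism
classes of simple left `R`-modules of cardinality `n` (equivalently, finitely many
quotients `R/m` by maximal left ideals up to isomorphism). Then for every finitely
generated left `R`-module `M` and every `n ≥ 1`, the set of submodules `X ⊆ M` with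
`|M/X| = n` is finite. -/
theorem stmt_19 {R : Type u} [Ring R]
    (hfin : ∀ (S : Type u) [AddCommGroup S] [Module R S], IsSimpleModule R S → Finite S)
    (hfp : ∀ (S : Type u) [AddCommGroup S] [Module R S], IsSimpleModule R S →
      Module.FinitePresentation R S)
    (hiso : ∀ n : ℕ, ∃ T : Set (Submodule R R), T.Finite ∧
      ∀ m : Submodule R R, IsCoatom m → Nat.card (R ⧸ m) = n →
        ∃ m' ∈ T, Nonempty ((R ⧸ m) ≃ₗ[R] (R ⧸ m'))) :
    ∀ (M : Type u) [AddCommGroup M] [Module R M], Module.Finite R M →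
      ∀ n : ℕ, 1 ≤ n → {X : Submodule R M | Nat.card (M ⧸ X) = n}.Finite := by
  suffices H : ∀ n : ℕ, ∀ (M : Type u) [AddCommGroup M] [Module R M], Module.Finite R M →
      1 ≤ n → {X : Submodule R M | Nat.card (M ⧸ X) = n}.Finite by
    intro M _ _ hM n hn
    exact H n M hM hn
  intro n
  induction n using Nat.strong_induction_on with
  | _ n IH =>
  intro M _ _ hM hn
  haveI := hM
  rcases eq_or_lt_of_le hn with h1 | h2
  · -- n = 1 : only X = ⊤
    refine Set.Finite.subset (Set.finite_singleton (⊤ : Submodule R M)) ?_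
    intro X hX
    have hX' : Nat.card (M ⧸ X) = n := hX
    have : Subsingleton (M ⧸ X) := by
      have h1' : Nat.card (M ⧸ X) = 1 := by omega
      exact (Nat.card_eq_one_iff_unique.mp h1').1
    exact Submodule.Quotient.subsingleton_iff.mp this
  · -- n ≥ 2
    -- the finite set of candidate maximal submodules
    have hYfin : ∀ m ∈ n.divisors,
        {Y : Submodule R M | IsCoatom Y ∧ Nat.card (M ⧸ Y) = m}.Finite := by
      intro m hmd
      have hm1 : 1 ≤ m := Nat.pos_of_mem_divisors hmd
      exact aux_coatoms_finite hiso M m hm1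
    -- each coatom is finitely generated, quotients counted by induction
    have hinner : ∀ Y : Submodule R M, IsCoatom Y → Nat.card (M ⧸ Y) ∣ n →
        {Z : Submodule R Y | Nat.card (Y ⧸ Z) = n / Nat.card (M ⧸ Y)}.Finite := by
      intro Y hY hdvd
      haveI hs : IsSimpleModule R (M ⧸ Y) := isSimpleModule_iff_isCoatom.mpr hY
      haveI : Module.FinitePresentation R (M ⧸ Y) := hfp (M ⧸ Y) hs
      have hYfg : Y.FG := by
        have := Module.FinitePresentation.fg_ker (N := M ⧸ Y) Y.mkQ
          (Submodule.Quotient.mk_surjective Y)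
        rwa [Submodule.ker_mkQ] at this
      haveI : Module.Finite R Y := (Module.Finite.iff_fg).mpr hYfg
      set m := Nat.card (M ⧸ Y) with hm
      have hm2 : 2 ≤ m := by
        haveI : Nontrivial (M ⧸ Y) := IsSimpleModule.nontrivial R (M ⧸ Y)
        haveI : Finite (M ⧸ Y) := hfin (M ⧸ Y) hs
        have h1 : 1 < m := Finite.one_lt_card_iff_nontrivial.mpr ‹_›
        omega
      have hlt : n / m < n := Nat.div_lt_self (by omega) (by omega)
      have hge : 1 ≤ n / m := (Nat.one_le_div_iff (by omega)).mpr (Nat.le_of_dvd (by omega) hdvd)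
      exact IH (n / m) hlt Y inferInstance hge
    -- main covering argument
    have key : {X : Submodule R M | Nat.card (M ⧸ X) = n} ⊆
        ⋃ Y ∈ ⋃ m ∈ (n.divisors : Set ℕ),
            {Y : Submodule R M | IsCoatom Y ∧ Nat.card (M ⧸ Y) = m},
          (fun Z : Submodule R Y => Z.map Y.subtype) ''
            {Z : Submodule R Y | Nat.card (Y ⧸ Z) = n / Nat.card (M ⧸ Y)} := by
      intro X hX
      simp only [Set.mem_setOf_eq] at hX
      -- M ⧸ X is finite and nontrivial
      haveI hfinQ : Finite (M ⧸ X) := Nat.finite_of_card_ne_zero (by omega)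
      haveI : Nontrivial (M ⧸ X) := Finite.one_lt_card_iff_nontrivial.mp (by omega)
      haveI : Finite (Submodule R (M ⧸ X)) :=
        Finite.of_injective (fun p : Submodule R (M ⧸ X) => (p : Set (M ⧸ X)))
          SetLike.coe_injective
      -- find a coatom above ⊥ in the quotient
      obtain ⟨p, hp, -⟩ := (eq_top_or_exists_le_coatom (⊥ : Submodule R (M ⧸ X))).resolve_left
        bot_ne_top
      set Y := p.comap X.mkQ with hYdef
      have hXY : X ≤ Y := by
        intro x hx
        simp only [hYdef, Submodule.mem_comap, Submodule.mkQ_apply]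
        rw [Submodule.Quotient.mk_eq_zero X |>.mpr hx]
        exact p.zero_mem
      have hmap : Y.map X.mkQ = p := by
        rw [hYdef, Submodule.map_comap_eq, Submodule.range_mkQ, top_inf_eq]
      haveI : IsSimpleModule R ((M ⧸ X) ⧸ p) := isSimpleModule_iff_isCoatom.mpr hp
      have e : (M ⧸ Y) ≃ₗ[R] ((M ⧸ X) ⧸ p) :=
        (Submodule.quotientQuotientEquivQuotient X Y hXY).symm ≪≫ₗ
          Submodule.quotEquivOfEq _ _ hmap
      haveI : IsSimpleModule R (M ⧸ Y) := IsSimpleModule.congr e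
      have hYco : IsCoatom Y := isSimpleModule_iff_isCoatom.mp ‹_›
      set m := Nat.card (M ⧸ Y) with hm
      set k := Nat.card (Y ⧸ X.comap Y.subtype) with hk
      have hmul : n = k * m := by rw [← hX]; exact aux_card_mul X Y hXY
      have hmne : m ≠ 0 := by intro h0; rw [h0, Nat.mul_zero] at hmul; omega
      have hdvd : m ∣ n := ⟨k, by rw [hmul, Nat.mul_comm]⟩
      have hmem : Y ∈ ⋃ m' ∈ (n.divisors : Set ℕ),
          {Y : Submodule R M | IsCoatom Y ∧ Nat.card (M ⧸ Y) = m'} := by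
        refine Set.mem_biUnion ?_ ⟨hYco, rfl⟩
        simp only [Finset.coe_sort_coe, Finset.mem_coe, Nat.mem_divisors]
        exact ⟨hdvd, by omega⟩
      refine Set.mem_biUnion hmem ?_
      refine ⟨X.comap Y.subtype, ?_, ?_⟩
      · show Nat.card (Y ⧸ X.comap Y.subtype) = n / m
        rw [← hk, hmul, Nat.mul_div_cancel k (show 0 < m by omega)]
      · show (X.comap Y.subtype).map Y.subtype = X
        rw [Submodule.map_comap_subtype, inf_eq_right.mpr hXY]
    refine Set.Finite.subset ?_ key
    refine Set.Finite.biUnion ?_ ?_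
    · refine Set.Finite.biUnion (Set.finite_coe_iff.mp inferInstance) ?_
      intro m hm
      exact hYfin m (by simpa using hm)
    · intro Y hY
      simp only [Set.mem_iUnion, Finset.mem_coe, Nat.mem_divisors] at hY
      obtain ⟨m, ⟨hdvd, hne⟩, hYco, hcard⟩ := hY
      exact Set.Finite.image _ (hinner Y hYco (hcard ▸ hdvd))
end
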